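/- Every monoid homomorphism between two Puiseux monoids P and Q (nontrivial additive submonoids of ℚ≥0) is given by multiplication by a nonnegative rational: if f : P → Q is additive with f(0)=0, then there exists r ∈ ℚ≥0 such that f(x) = r·x for all x ∈ P. -/
import Mathlib


/-- A Puiseux monoid: an additive submonoid of ℚ consisting of nonnegative rationals. -/
def PM.Puiseux (P : AddSubmonoid ℚ) : Prop := ∀ x ∈ P, 0 ≤ x

/-- `a` is an atom of `P`. -/
def PM.IsAtom (P : AddSubmonoid ℚ) (a : ℚ) : Prop :=
  a ∈ P ∧ a ≠ 0 ∧ ∀ x ∈ P, ∀ y ∈ P, a = x + y → x = 0 ∨ y = 0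

/-- A factorization of `x` is a multiset of atoms of `P` summing to `x`. -/
def PM.IsFactorization (P : AddSubmonoid ℚ) (x : ℚ) (z : Multiset ℚ) : Prop :=
  (∀ a ∈ z, PM.IsAtom P a) ∧ z.sum = x

/-- The set of lengths of `x`. -/
def PM.Lengths (P : AddSubmonoid ℚ) (x : ℚ) : Set ℕ :=
  {n | ∃ z : Multiset ℚ, PM.IsFactorization P x z ∧ Multiset.card z = n}

/-- `P` is atomic: it is generated by its set of atoms. -/
def PM.Atomic (P : AddSubmonoid ℚ) : Prop :=
  AddSubmonoid.closure {a | PM.IsAtom P a} = P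

/-- The union of sets of lengths `U_k(P)`. -/
def PM.U (P : AddSubmonoid ℚ) (k : ℕ) : Set ℕ :=
  {l | ∃ x ∈ P, k ∈ PM.Lengths P x ∧ l ∈ PM.Lengths P x}

theorem stmt10 (P Q : AddSubmonoid ℚ) (hP : PM.Puiseux P) (hQ : PM.Puiseux Q)
    (hPnt : P ≠ ⊥) (f : P →+ Q) :
    ∃ r : ℚ, 0 ≤ r ∧ ∀ x : P, ((f x : ℚ)) = r * (x : ℚ) := by
  have hex : ∃ p, p ∈ P ∧ p ≠ 0 := by
    by_contra h
    push_neg at h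
    apply hPnt
    ext x
    simp only [AddSubmonoid.mem_bot]
    exact ⟨fun hx => h x hx, fun hx => hx ▸ P.zero_mem⟩
  obtain ⟨p, hpP, hp0⟩ := hex
  have hppos : 0 < p := lt_of_le_of_ne (hP p hpP) (Ne.symm hp0)
  set pe : P := ⟨p, hpP⟩ with hpe
  refine ⟨(f pe : ℚ) / p, div_nonneg (hQ _ (f pe).2) hppos.le, ?_⟩
  intro x
  set q : ℚ := (x : ℚ) with hqdef
  have hq0 : 0 ≤ q := hP _ x.2
  set n : ℕ := q.den * p.num.toNat with hn
  set m : ℕ := p.den * q.num.toNat with hm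
  have hnpos : 0 < n := by
    have h := Rat.num_pos.mpr hppos
    have h2 := q.pos
    have h3 : 0 < p.num.toNat := by omega
    simp only [hn]
    exact Nat.mul_pos q.pos h3
  have key : (n : ℚ) * q = (m : ℚ) * p := by
    have h1 : ((q.num.toNat : ℕ) : ℚ) = (q.num : ℚ) := by
      exact_mod_cast congrArg (fun z : ℤ => (z : ℚ)) (Int.toNat_of_nonneg (Rat.num_nonneg.mpr hq0))
    have h2 : ((p.num.toNat : ℕ) : ℚ) = (p.num : ℚ) := by
      exact_mod_cast congrArg (fun z : ℤ => (z : ℚ)) (Int.toNat_of_nonneg (Rat.num_nonneg.mpr hppos.le))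
    push_cast [hn, hm]
    rw [h1, h2]
    linear_combination (p.num : ℚ) * Rat.den_mul_eq_num q - (q.num : ℚ) * Rat.den_mul_eq_num p
  have hmem : n • x = m • pe := by
    apply Subtype.ext
    push_cast
    simpa [nsmul_eq_mul] using key
  have hfq : (n : ℚ) * (f x : ℚ) = (m : ℚ) * (f pe : ℚ) := by
    have h := congrArg (fun y : Q => (y : ℚ)) (congrArg f hmem)
    simpa [map_nsmul, nsmul_eq_mul] using h
  rw [div_mul_eq_mul_div, eq_div_iff hppos.ne']
  have hcancel : (n : ℚ) * ((f x : ℚ) * p) = (n : ℚ) * ((f pe : ℚ) * q) := by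
    calc (n : ℚ) * ((f x : ℚ) * p) = ((n : ℚ) * (f x : ℚ)) * p := by ring
      _ = ((m : ℚ) * (f pe : ℚ)) * p := by rw [hfq]
      _ = (f pe : ℚ) * ((m : ℚ) * p) := by ring
      _ = (f pe : ℚ) * ((n : ℚ) * q) := by rw [← key]
      _ = (n : ℚ) * ((f pe : ℚ) * q) := by ring
  exact mul_left_cancel₀ (by exact_mod_cast hnpos.ne') hcancel
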